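/- arXiv:2012.11280 — 3 statements merged into one kernel-verified Lean document; each statement's English description precedes it below -/
import Mathlib

section
/- If P e_j ≠ c P e_i for all i ≠ j and all scalars c, then e_j is the unique solution of the weighted basis pursuit problem: minimize ∑_i ‖P e_i‖₂ |x_i| subject to P x = P e_j. -/
open Matrix Finset

/-- Euclidean norm of a vector in `Fin n → ℝ`. -/
noncomputable def enorm2 {n : ℕ} (v : Fin n → ℝ) : ℝ := Real.sqrt (∑ i, v i ^ 2)

lemma enorm_eq_norm {n : ℕ} (v : Fin n → ℝ) :
    enorm2 v = ‖(WithLp.equiv 2 (Fin n → ℝ)).symm v‖ := by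
  rw [EuclideanSpace.norm_eq]
  simp [enorm2, sq_abs]

/-- If `P e_j ≠ c • P e_i` for all `i ≠ j` and all scalars `c`, then `e_j` is the
unique solution of the weighted basis pursuit problem:
minimize `∑ i, ‖P e_i‖₂ * |x i|` subject to `P x = P e_j`. -/
theorem weighted_basis_pursuit_exact_recovery {n : ℕ}
    (P : Matrix (Fin n) (Fin n) ℝ) (hsymm : Pᵀ = P) (hidem : P * P = P)
    (hnz : ∀ i : Fin n, P.mulVec (Pi.single i 1) ≠ 0)
    (j : Fin n)
    (hpar : ∀ i : Fin n, i ≠ j → ∀ c : ℝ,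
      P.mulVec (Pi.single j 1) ≠ c • P.mulVec (Pi.single i 1)) :
    ∀ x : Fin n → ℝ, P.mulVec x = P.mulVec (Pi.single j 1) → x ≠ Pi.single j 1 →
      ∑ i, enorm2 (P.mulVec (Pi.single i 1)) * |(Pi.single j 1 : Fin n → ℝ) i| <
        ∑ i, enorm2 (P.mulVec (Pi.single i 1)) * |x i| := by
  intro x hfeas hne
  classical
  set p : Fin n → EuclideanSpace ℝ (Fin n) :=
    fun i => (WithLp.equiv 2 (Fin n → ℝ)).symm (P.mulVec (Pi.single i 1)) with hp
  have hpapp : ∀ i m, p i m = P m i := by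
    intro i m
    simp [hp, Matrix.mulVec, dotProduct, Pi.single_apply, mul_ite]
  have hinner : ∀ k i, (inner ℝ (p k) (p i) : ℝ) = P k i := by
    intro k i
    have h1 : (inner ℝ (p k) (p i) : ℝ) = ∑ m, P m k * P m i := by
      simp [PiLp.inner_apply, hpapp, RCLike.inner_apply, mul_comm]
    have h2 : ∑ m, P m k * P m i = (Pᵀ * P) k i := by
      simp [Matrix.mul_apply, Matrix.transpose_apply]
    rw [h1, h2, hsymm, hidem]
  have hpne : ∀ i, p i ≠ 0 := by
    intro i h
    apply hnz i
    funext m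
    have := congrFun (congrArg (fun (v : EuclideanSpace ℝ (Fin n)) => (v : Fin n → ℝ)) h) m
    simpa [hpapp, Matrix.mulVec, dotProduct, Pi.single_apply, mul_ite] using this
  have hnormsq : ∀ i, ‖p i‖ ^ 2 = P i i := by
    intro i
    rw [← real_inner_self_eq_norm_sq, hinner]
  -- the LHS is ‖p j‖
  have hLHS : ∑ i, enorm2 (P.mulVec (Pi.single i 1)) * |(Pi.single j 1 : Fin n → ℝ) i|
      = ‖p j‖ := by
    rw [Finset.sum_eq_single j]
    · simp [enorm_eq_norm, hp]
    · intro i _ hij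
      simp [Pi.single_apply, hij]
    · simp
  have hen : ∀ i, enorm2 (P.mulVec (Pi.single i 1)) = ‖p i‖ := fun i => enorm_eq_norm _
  rw [hLHS]
  simp only [hen]
  -- there is a nonzero coordinate off j
  have hex : ∃ i, i ≠ j ∧ x i ≠ 0 := by
    by_contra h
    push_neg at h
    have hx : x = Pi.single j (x j) := by
      funext i
      by_cases hij : i = j
      · subst hij; simp
      · simp [Pi.single_apply, hij, h i hij]
    have hsm : Pi.single j (x j) = x j • (Pi.single j 1 : Fin n → ℝ) := by
      funext i; simp [Pi.single_apply]
    rw [hx, hsm, Matrix.mulVec_smul] at hfeas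
    have hxj : x j = 1 := by
      have : (x j - 1) • P.mulVec (Pi.single j 1) = 0 := by
        rw [sub_smul, one_smul, hfeas]; simp
      rcases smul_eq_zero.mp this with h1 | h1
      · linarith [sub_eq_zero.mp (by linarith [h1] : x j - 1 = 0)]
      · exact absurd h1 (hnz j)
    apply hne
    rw [hx, hxj]
  obtain ⟨i0, hi0j, hi0⟩ := hex
  -- key identity
  have hkey : ∑ i, x i * (inner ℝ (p j) (p i) : ℝ) = ‖p j‖ ^ 2 := by
    have h1 : ∑ i, x i * (inner ℝ (p j) (p i) : ℝ) = P.mulVec x j := by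
      simp only [hinner, Matrix.mulVec, dotProduct]
      exact Finset.sum_congr rfl fun i _ => mul_comm _ _
    rw [h1, hfeas, hnormsq]
    simp [Matrix.mulVec, dotProduct, Pi.single_apply, mul_ite]
  have hpos : (0:ℝ) < ‖p j‖ := norm_pos_iff.mpr (hpne j)
  have hterm_le : ∀ i, x i * (inner ℝ (p j) (p i) : ℝ) ≤ ‖p j‖ * (‖p i‖ * |x i|) := by
    intro i
    calc x i * (inner ℝ (p j) (p i) : ℝ) ≤ |x i * (inner ℝ (p j) (p i) : ℝ)| := le_abs_self _
    _ = |x i| * |(inner ℝ (p j) (p i) : ℝ)| := abs_mul _ _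
    _ ≤ |x i| * (‖p j‖ * ‖p i‖) := by
        exact mul_le_mul_of_nonneg_left (abs_real_inner_le_norm _ _) (abs_nonneg _)
    _ = ‖p j‖ * (‖p i‖ * |x i|) := by ring
  have hterm_lt : x i0 * (inner ℝ (p j) (p i0) : ℝ) < ‖p j‖ * (‖p i0‖ * |x i0|) := by
    rcases lt_or_eq_of_le (hterm_le i0) with h | h
    · exact h
    · exfalso
      -- equality forces |inner| = product of norms
      have hi0pos : (0:ℝ) < |x i0| := abs_pos.mpr hi0
      have habs : |(inner ℝ (p j) (p i0) : ℝ)| = ‖p j‖ * ‖p i0‖ := by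
        have h1 : |x i0| * |(inner ℝ (p j) (p i0) : ℝ)| = |x i0| * (‖p j‖ * ‖p i0‖) := by
          have hle1 : x i0 * (inner ℝ (p j) (p i0) : ℝ) ≤ |x i0| * |(inner ℝ (p j) (p i0) : ℝ)| := by
            rw [← abs_mul]; exact le_abs_self _
          have hle2 : |x i0| * |(inner ℝ (p j) (p i0) : ℝ)| ≤ |x i0| * (‖p j‖ * ‖p i0‖) :=
            mul_le_mul_of_nonneg_left (abs_real_inner_le_norm _ _) (abs_nonneg _)
          nlinarith [h]
        exact mul_left_cancel₀ (ne_of_gt hi0pos) h1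
      have hpi0pos : (0:ℝ) < ‖p i0‖ := norm_pos_iff.mpr (hpne i0)
      -- get p j = c • p i0 for some c
      have hcase : ‖p i0‖ • p j = ‖p j‖ • p i0 ∨ ‖p i0‖ • p j = -‖p j‖ • p i0 := by
        rcases abs_eq (by positivity : (0:ℝ) ≤ ‖p j‖ * ‖p i0‖) |>.mp habs with h' | h'
        · left; exact inner_eq_norm_mul_iff_real.mp h'
        · right
          have : (inner ℝ (p j) (-p i0) : ℝ) = ‖p j‖ * ‖-p i0‖ := by
            rw [inner_neg_right, h', norm_neg]; ring
          have := inner_eq_norm_mul_iff_real.mp this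
          rw [norm_neg] at this
          rw [this]; simp
      have hc : ∃ c : ℝ, p j = c • p i0 := by
        rcases hcase with h' | h'
        · refine ⟨‖p j‖ / ‖p i0‖, ?_⟩
          have h2 := congrArg (fun v : EuclideanSpace ℝ (Fin n) => (‖p i0‖)⁻¹ • v) h'
          simp only [smul_smul, inv_mul_cancel₀ (ne_of_gt hpi0pos), one_smul] at h2
          rw [div_eq_inv_mul]; exact h2
        · refine ⟨-‖p j‖ / ‖p i0‖, ?_⟩
          have h2 := congrArg (fun v : EuclideanSpace ℝ (Fin n) => (‖p i0‖)⁻¹ • v) h'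
          simp only [smul_smul, inv_mul_cancel₀ (ne_of_gt hpi0pos), one_smul] at h2
          rw [div_eq_inv_mul]; exact h2
      obtain ⟨c, hcval⟩ := hc
      apply hpar i0 hi0j c
      funext m
      have := congrFun (congrArg (fun (v : EuclideanSpace ℝ (Fin n)) => (v : Fin n → ℝ)) hcval) m
      simp only [PiLp.smul_apply, smul_eq_mul] at this
      have h1 : P.mulVec (Pi.single j 1) m = P m j := by
        simp [Matrix.mulVec, dotProduct, Pi.single_apply, mul_ite]
      have h2 : P.mulVec (Pi.single i0 1) m = P m i0 := by
        simp [Matrix.mulVec, dotProduct, Pi.single_apply, mul_ite]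
      rw [h1, Pi.smul_apply, h2, smul_eq_mul]
      rw [hpapp, hpapp] at this
      exact this
  have hsum : ∑ i, x i * (inner ℝ (p j) (p i) : ℝ) < ∑ i, ‖p j‖ * (‖p i‖ * |x i|) :=
    Finset.sum_lt_sum (fun i _ => hterm_le i) ⟨i0, Finset.mem_univ i0, hterm_lt⟩
  rw [hkey, ← Finset.mul_sum] at hsum
  have := (mul_lt_mul_iff_right₀ hpos).mp (by nlinarith [hsum] : ‖p j‖ * ‖p j‖ < ‖p j‖ * ∑ i, ‖p i‖ * |x i|)
  exact this
end

section
/- The j-th component of W⁻¹ P e_j equals ‖P e_j‖₂, and it is a maximum: for every i, the i-th component of W⁻¹ P e_j satisfies [W⁻¹ P e_j]_i = ‖P e_j‖₂ ⟨P e_j/‖P e_j‖₂, P e_i/‖P e_i‖₂⟩ ≤ [W⁻¹ P e_j]_j. -/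
open Matrix Finset

noncomputable def enorm {n : ℕ} (v : Fin n → ℝ) : ℝ := Real.sqrt (∑ i, v i ^ 2)

/-- The `i`-th component of `W⁻¹ P e_j`, where `W` is diagonal with entries `‖P e_i‖₂`. -/
noncomputable def wInvP {n : ℕ} (P : Matrix (Fin n) (Fin n) ℝ) (j i : Fin n) : ℝ :=
  P.mulVec (Pi.single j 1) i / _root_.enorm (P.mulVec (Pi.single i 1))

lemma mulVec_single_apply {n : ℕ} (P : Matrix (Fin n) (Fin n) ℝ) (j i : Fin n) :
    P.mulVec (Pi.single j 1) i = P i j := by simp [Matrix.mulVec_single]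

lemma inner_eq {n : ℕ} (P : Matrix (Fin n) (Fin n) ℝ) (hsymm : Pᵀ = P) (hidem : P * P = P)
    (a b : Fin n) :
    ∑ k, P.mulVec (Pi.single a 1) k * P.mulVec (Pi.single b 1) k = P a b := by
  have : ∑ k, P.mulVec (Pi.single a 1) k * P.mulVec (Pi.single b 1) k = (Pᵀ * P) a b := by
    simp [Matrix.mul_apply, mulVec_single_apply, Matrix.transpose_apply]
  rw [this, hsymm, hidem]

lemma enorm_sq {n : ℕ} (P : Matrix (Fin n) (Fin n) ℝ) (hsymm : Pᵀ = P) (hidem : P * P = P)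
    (a : Fin n) : _root_.enorm (P.mulVec (Pi.single a 1)) ^ 2 = P a a := by
  have h := inner_eq P hsymm hidem a a
  have hnn : (0:ℝ) ≤ ∑ k, P.mulVec (Pi.single a 1) k ^ 2 :=
    Finset.sum_nonneg fun k _ => sq_nonneg _
  rw [_root_.enorm, Real.sq_sqrt hnn, ← h]
  exact Finset.sum_congr rfl fun k _ => sq _

lemma wInvP_enorm_pos {n : ℕ} (v : Fin n → ℝ) (hv : v ≠ 0) : 0 < _root_.enorm v := by
  have : ∃ k, v k ≠ 0 := by
    by_contra h
    push_neg at h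
    exact hv (funext h)
  obtain ⟨k, hk⟩ := this
  have : (0:ℝ) < ∑ i, v i ^ 2 := by
    apply Finset.sum_pos' (fun i _ => sq_nonneg _)
    exact ⟨k, Finset.mem_univ k, by positivity⟩
  exact Real.sqrt_pos.mpr this

/-- The `j`-th component of `W⁻¹ P e_j` equals `‖P e_j‖₂`, and it is a maximum:
for every `i`, `[W⁻¹ P e_j]_i = ‖P e_j‖₂ * ⟨P e_j/‖P e_j‖₂, P e_i/‖P e_i‖₂⟩ ≤ [W⁻¹ P e_j]_j`. -/
theorem wInvP_max_property {n : ℕ}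
    (P : Matrix (Fin n) (Fin n) ℝ) (hsymm : Pᵀ = P) (hidem : P * P = P)
    (hnz : ∀ i : Fin n, P.mulVec (Pi.single i 1) ≠ 0)
    (j : Fin n) :
    wInvP P j j = _root_.enorm (P.mulVec (Pi.single j 1)) ∧
    ∀ i : Fin n,
      wInvP P j i =
        _root_.enorm (P.mulVec (Pi.single j 1)) *
          (∑ k, (P.mulVec (Pi.single j 1) k / _root_.enorm (P.mulVec (Pi.single j 1))) *
                (P.mulVec (Pi.single i 1) k / _root_.enorm (P.mulVec (Pi.single i 1)))) ∧
      wInvP P j i ≤ wInvP P j j := by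
  set v : Fin n → Fin n → ℝ := fun a => P.mulVec (Pi.single a 1) with hv
  have hpos : ∀ a, 0 < _root_.enorm (v a) := fun a => wInvP_enorm_pos _ (hnz a)
  have hne : ∀ a, _root_.enorm (v a) ≠ 0 := fun a => (hpos a).ne'
  have hsq : ∀ a, _root_.enorm (v a) ^ 2 = P a a := fun a => enorm_sq P hsymm hidem a
  have happ : ∀ a b, v a b = P b a := fun a b => mulVec_single_apply P a b
  have hPsym : ∀ a b, P a b = P b a := fun a b => congrFun (congrFun hsymm b) a
  have hjj : wInvP P j j = _root_.enorm (v j) := by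
    show v j j / _root_.enorm (v j) = _root_.enorm (v j)
    rw [happ, ← hsq j, sq, mul_div_assoc, div_self (hne j), mul_one]
  refine ⟨hjj, fun i => ?_⟩
  have hinner : ∑ k, v j k * v i k = P j i := inner_eq P hsymm hidem j i
  constructor
  · show v j i / _root_.enorm (v i) =
      _root_.enorm (v j) * ∑ k, (v j k / _root_.enorm (v j)) * (v i k / _root_.enorm (v i))
    have hs : ∑ k, (v j k / _root_.enorm (v j)) * (v i k / _root_.enorm (v i)) =
        (∑ k, v j k * v i k) / (_root_.enorm (v j) * _root_.enorm (v i)) := by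
      rw [Finset.sum_div]
      exact Finset.sum_congr rfl fun k _ => by field_simp
    rw [hs, hinner, happ, hPsym i j, mul_div_assoc', mul_div_mul_left _ _ (hne j)]
  · show v j i / _root_.enorm (v i) ≤ v j j / _root_.enorm (v j)
    rw [happ j i, happ j j, ← hsq j, sq, mul_div_assoc, div_self (hne j), mul_one,
      div_le_iff₀ (hpos i), hPsym i j, ← hinner]
    have h1 : (∑ k, v j k * v i k) ^ 2 ≤ (∑ k, v j k ^ 2) * ∑ k, v i k ^ 2 :=
      Finset.sum_mul_sq_le_sq_mul_sq _ _ _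
    have h2 : ∑ k, v j k * v i k ≤ Real.sqrt ((∑ k, v j k ^ 2) * ∑ k, v i k ^ 2) := by
      calc ∑ k, v j k * v i k ≤ |∑ k, v j k * v i k| := le_abs_self _
        _ = Real.sqrt ((∑ k, v j k * v i k) ^ 2) := (Real.sqrt_sq_eq_abs _).symm
        _ ≤ _ := Real.sqrt_le_sqrt h1
    rwa [Real.sqrt_mul (Finset.sum_nonneg fun k _ => sq_nonneg _)] at h2
end

section
/- Suppose A e_m + A e_n = c A e_j for some scalar c and index j, and assume no two columns of A are parallel. Then ‖W (c e_j)‖₁ < ‖W(e_m + e_n)‖₁, where W is the diagonal weight matrix with entries ‖P e_i‖₂ and P = A† A. Consequently e_m + e_n is not a solution of the weighted basis pursuit problem min ‖W x‖₁ subject to P x = P e_m + P e_n. -/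
open Matrix Finset

noncomputable def eucNorm {n : ℕ} (v : Fin n → ℝ) : ℝ := Real.sqrt (∑ i, v i ^ 2)

lemma eucNorm_eq {n : ℕ} (v : Fin n → ℝ) :
    eucNorm v = ‖(WithLp.equiv 2 (Fin n → ℝ)).symm v‖ := by
  rw [EuclideanSpace.norm_eq]
  simp [eucNorm, sq_abs]

/-- If `A e_m + A e_n = c • A e_j` and no two columns of `A` are parallel, then
`‖W (c e_j)‖₁ < ‖W (e_m + e_n)‖₁` where `W` is diagonal with entries `‖P e_i‖₂`, `P = A† A`.
Consequently `e_m + e_n` is not a solution of the weighted basis pursuit problem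
`min ‖W x‖₁ s.t. P x = P e_m + P e_n` (since `c • e_j` is feasible and strictly better). -/
theorem two_sources_not_recovered {M N : ℕ}
    (A : Matrix (Fin M) (Fin N) ℝ) (B : Matrix (Fin N) (Fin M) ℝ)
    (h1 : A * B * A = A) (h2 : B * A * B = B)
    (h3 : (A * B)ᵀ = A * B) (h4 : (B * A)ᵀ = B * A)
    (m n j : Fin N) (hmn : m ≠ n) (hmj : m ≠ j) (hnj : n ≠ j)
    (c : ℝ)
    (hc : A.mulVec (Pi.single m 1) + A.mulVec (Pi.single n 1) = c • A.mulVec (Pi.single j 1))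
    (hpar : ∀ i i' : Fin N, i ≠ i' → ∀ t : ℝ,
      A.mulVec (Pi.single i' 1) ≠ t • A.mulVec (Pi.single i 1)) :
    (B * A).mulVec (c • (Pi.single j 1 : Fin N → ℝ)) =
        (B * A).mulVec ((Pi.single m 1 + Pi.single n 1 : Fin N → ℝ)) ∧
    ∑ i, eucNorm ((B * A).mulVec (Pi.single i 1)) * |(c • (Pi.single j 1 : Fin N → ℝ)) i| <
      ∑ i, eucNorm ((B * A).mulVec (Pi.single i 1)) *
        |((Pi.single m 1 + Pi.single n 1 : Fin N → ℝ)) i| := by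
  set P := B * A with hP
  have hAP : ∀ v : Fin N → ℝ, A.mulVec (P.mulVec v) = A.mulVec v := by
    intro v
    rw [mulVec_mulVec, hP, ← Matrix.mul_assoc, h1]
  have key : P.mulVec (c • (Pi.single j 1 : Fin N → ℝ)) =
      P.mulVec (Pi.single m 1) + P.mulVec (Pi.single n 1) := by
    rw [hP, ← mulVec_mulVec, ← mulVec_mulVec, ← mulVec_mulVec, ← mulVec_add,
      mulVec_smul A, ← hc]
  have part1 : P.mulVec (c • (Pi.single j 1 : Fin N → ℝ)) =
      P.mulVec ((Pi.single m 1 + Pi.single n 1 : Fin N → ℝ)) := by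
    rw [key, mulVec_add]
  refine ⟨part1, ?_⟩
  set w : Fin N → ℝ := fun i => eucNorm (P.mulVec (Pi.single i 1)) with hw
  have hL : ∑ i, w i * |(c • (Pi.single j 1 : Fin N → ℝ)) i| = w j * |c| := by
    rw [Finset.sum_eq_single j]
    · simp
    · intro i _ hij
      simp [Pi.single_apply, hij]
    · simp
  have hR : ∑ i, w i * |((Pi.single m 1 + Pi.single n 1 : Fin N → ℝ)) i| = w m + w n := by
    have h5 : ∀ i, w i * |((Pi.single m 1 + Pi.single n 1 : Fin N → ℝ)) i| =
        w i * (Pi.single m 1 : Fin N → ℝ) i + w i * (Pi.single n 1 : Fin N → ℝ) i := by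
      intro i
      rcases eq_or_ne i m with rfl | him
      · simp [Pi.single_apply, hmn.symm]
      rcases eq_or_ne i n with rfl | hin
      · simp [Pi.single_apply, hmn]
      · simp [Pi.single_apply, him, hin]
    rw [Finset.sum_congr rfl fun i _ => h5 i, Finset.sum_add_distrib]
    simp [Pi.single_apply, mul_ite, Finset.sum_ite_eq']
  rw [hL, hR]
  set E := (WithLp.equiv 2 (Fin N → ℝ)).symm with hE
  have hnot : ¬ SameRay ℝ (E (P.mulVec (Pi.single m 1))) (E (P.mulVec (Pi.single n 1))) := by
    intro h
    rcases h with h | h | ⟨r, s, hr, hs, hrs⟩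
    · have h0 : P.mulVec (Pi.single m 1) = 0 := by
        simpa [hE] using congrArg (WithLp.equiv 2 (Fin N → ℝ)) h
      exact hpar n m hmn.symm 0 (by rw [← hAP (Pi.single m 1), h0]; simp)
    · have h0 : P.mulVec (Pi.single n 1) = 0 := by
        simpa [hE] using congrArg (WithLp.equiv 2 (Fin N → ℝ)) h
      exact hpar m n hmn 0 (by rw [← hAP (Pi.single n 1), h0]; simp)
    · refine hpar m n hmn (r / s) ?_
      have h0 : P.mulVec (Pi.single n 1) = (r / s) • P.mulVec (Pi.single m 1) := by
        have h6 := congrArg (fun v => (s⁻¹ : ℝ) • WithLp.equiv 2 (Fin N → ℝ) v) hrs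
        change s⁻¹ • (r • P.mulVec (Pi.single m 1)) = s⁻¹ • (s • P.mulVec (Pi.single n 1)) at h6
        simp only [smul_smul] at h6
        rw [inv_mul_cancel₀ hs.ne', one_smul] at h6
        rw [div_eq_inv_mul]
        exact h6.symm
      rw [← hAP (Pi.single n 1), h0, mulVec_smul, hAP]
  have hlt := norm_add_lt_of_not_sameRay hnot
  rw [show E (P.mulVec (Pi.single m 1)) + E (P.mulVec (Pi.single n 1)) = E (P.mulVec (Pi.single m 1) + P.mulVec (Pi.single n 1)) from rfl] at hlt
  have hnorm1 : ‖E (P.mulVec (Pi.single m 1) + P.mulVec (Pi.single n 1))‖ = w j * |c| := by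
    rw [← key, mulVec_smul, show E (c • P.mulVec (Pi.single j 1)) = c • E (P.mulVec (Pi.single j 1)) from rfl, hE, norm_smul, Real.norm_eq_abs]
    simp only [hw]
    rw [eucNorm_eq, mul_comm]
  rw [hnorm1] at hlt
  simp only [hw, eucNorm_eq, hE] at hlt ⊢
  exact hlt
end
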